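/- The category of loops (objects: loops; morphisms: operation-preserving maps) is equivalent to the category of pointed regular permutation sets (objects: triples (M, Ω, ω) with M a regular permutation set on Ω and ω ∈ Ω; morphisms: pairs (f, Φ) with Φ(ω) = σ and Φ(m(α)) = f(m)(Φ(α)) for all m, α). An equivalence is given by the functor sending (M, Ω, ω) to the loop (Ω, ·_ω) and a morphism (f, Φ) to Φ. -/

import Mathlib

open CategoryTheory

/-- An object of the category of loops: a type with a binary operation having
a two-sided identity and unique left and right division. -/
structure LoopCat : Type 1 where
  carrier : Type
  mul : carrier → carrier → carrier
  e : carrier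
  e_mul : ∀ a, mul e a = a
  mul_e : ∀ a, mul a e = a
  divL : ∀ a b, ∃! x, mul a x = b
  divR : ∀ a b, ∃! y, mul y a = b

/-- A morphism of loops: an operation-preserving map. -/
@[ext]
structure LoopHom (L L' : LoopCat) where
  toFun : L.carrier → L'.carrier
  map_mul : ∀ a b, toFun (L.mul a b) = L'.mul (toFun a) (toFun b)

instance : Category LoopCat where
  Hom := LoopHom
  id L := ⟨_root_.id, fun _ _ => rfl⟩
  comp f g := ⟨g.toFun ∘ f.toFun, fun a b => by
    simp [Function.comp, f.map_mul, g.map_mul]⟩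
  id_comp _ := rfl
  comp_id _ := rfl
  assoc _ _ _ := rfl

/-- An object of the category of pointed regular permutation sets: a set `M`
of permutations of `pts` containing the identity and acting simply
transitively, with a base point. -/
structure RpsCat : Type 1 where
  pts : Type
  M : Set (Equiv.Perm pts)
  one_mem : 1 ∈ M
  reg : ∀ α β : pts, ∃! m : M, (m : Equiv.Perm pts) α = β
  pt : pts

/-- A morphism of pointed regular permutation sets: a pair `(f, Φ)` with
`Φ(ω) = σ` and `Φ(m(α)) = f(m)(Φ(α))`. -/
@[ext]
structure RpsHom (X Y : RpsCat) where
  f : X.M → Y.M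
  Φ : X.pts → Y.pts
  map_pt : Φ X.pt = Y.pt
  equivariant : ∀ (m : X.M) (α : X.pts),
    Φ ((m : Equiv.Perm X.pts) α) = (f m : Equiv.Perm Y.pts) (Φ α)

instance : Category RpsCat where
  Hom := RpsHom
  id X := ⟨_root_.id, _root_.id, rfl, fun _ _ => rfl⟩
  comp u v := ⟨v.f ∘ u.f, v.Φ ∘ u.Φ,
    by simp [Function.comp, u.map_pt, v.map_pt],
    fun m α => by simp [Function.comp, u.equivariant, v.equivariant]⟩
  id_comp _ := rfl
  comp_id _ := rfl
  assoc _ _ _ := rfl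

/-- `μ⁻¹(α)`: the unique element of `M` sending the base point to `α`. -/
noncomputable def minv (X : RpsCat) (α : X.pts) : X.M := (X.reg X.pt α).choose

lemma minv_spec (X : RpsCat) (α : X.pts) :
    (minv X α : Equiv.Perm X.pts) X.pt = α := (X.reg X.pt α).choose_spec.1

lemma minv_unique (X : RpsCat) (α : X.pts) (m : X.M)
    (h : (m : Equiv.Perm X.pts) X.pt = α) : m = minv X α :=
  (X.reg X.pt α).choose_spec.2 m h

/-- The loop `(Ω, ·_ω)` induced by a pointed regular permutation set:
`α ·_ω β = (μ⁻¹ α ∘ μ⁻¹ β)(ω)`. -/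
noncomputable def inducedLoop (X : RpsCat) : LoopCat where
  carrier := X.pts
  mul α β := (minv X α : Equiv.Perm X.pts) ((minv X β : Equiv.Perm X.pts) X.pt)
  e := X.pt
  e_mul := fun β => by
    show (minv X X.pt : Equiv.Perm X.pts) ((minv X β : Equiv.Perm X.pts) X.pt) = β
    rw [← minv_unique X X.pt ⟨1, X.one_mem⟩ rfl, minv_spec]
    rfl
  mul_e := fun α => by
    show (minv X α : Equiv.Perm X.pts) ((minv X X.pt : Equiv.Perm X.pts) X.pt) = α
    rw [minv_spec X X.pt]
    exact minv_spec X α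
  divL := fun a b => by
    simp only [minv_spec]
    exact ⟨(minv X a : Equiv.Perm X.pts).symm b,
      Equiv.apply_symm_apply _ _,
      fun y hy => by rw [← hy, Equiv.symm_apply_apply]⟩
  divR := fun a b => by
    simp only [minv_spec]
    obtain ⟨m, hm, hu⟩ := X.reg a b
    refine ⟨(m : Equiv.Perm X.pts) X.pt, ?_, ?_⟩
    · show (minv X ((m : Equiv.Perm X.pts) X.pt) : Equiv.Perm X.pts) a = b
      rw [← minv_unique X ((m : Equiv.Perm X.pts) X.pt) m rfl]
      exact hm
    · intro y hy
      have h := hu _ hy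
      rw [← h]
      exact (minv_spec X y).symm

/-- The functor from pointed regular permutation sets to loops, sending
`(M, Ω, ω)` to `(Ω, ·_ω)` and `(f, Φ)` to `Φ`. -/
noncomputable def F : RpsCat ⥤ LoopCat where
  obj := inducedLoop
  map {X Y} u := ⟨u.Φ, fun (a b : X.pts) => by
    have key : ∀ α, u.f (minv X α) = minv Y (u.Φ α) := fun α =>
      minv_unique Y (u.Φ α) _ (by rw [← u.map_pt, ← u.equivariant, minv_spec])
    show u.Φ ((minv X a : Equiv.Perm X.pts) ((minv X b : Equiv.Perm X.pts) X.pt))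
      = (minv Y (u.Φ a) : Equiv.Perm Y.pts) ((minv Y (u.Φ b) : Equiv.Perm Y.pts) Y.pt)
    rw [u.equivariant, u.equivariant, u.map_pt, key, key]⟩
  map_id _ := rfl
  map_comp _ _ := rfl

/-- The category of loops is equivalent to the category of
pointed regular permutation sets, via the functor sending `(M, Ω, ω)` to
`(Ω, ·_ω)` and `(f, Φ)` to `Φ`. -/

lemma minv_apply_pt (X : RpsCat) (m : X.M) :
    minv X ((m : Equiv.Perm X.pts) X.pt) = m :=
  (minv_unique X _ m rfl).symm

lemma inducedLoop_mul (X : RpsCat) (a b : X.pts) :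
    (inducedLoop X).mul a b = (minv X a : Equiv.Perm X.pts) b := by
  show (minv X a : Equiv.Perm X.pts) ((minv X b : Equiv.Perm X.pts) X.pt) = _
  rw [minv_spec]

lemma LoopHom.map_e {L L' : LoopCat} (h : LoopHom L L') : h.toFun L.e = L'.e := by
  obtain ⟨x, _, hu⟩ := L'.divL (h.toFun L.e) (h.toFun L.e)
  have h1 : L'.mul (h.toFun L.e) (h.toFun L.e) = h.toFun L.e := by
    rw [← h.map_mul, L.e_mul]
  have h2 : L'.mul (h.toFun L.e) L'.e = h.toFun L.e := L'.mul_e _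
  rw [hu _ h1, ← hu _ h2]

noncomputable def loopLeftMul (L : LoopCat) (a : L.carrier) : Equiv.Perm L.carrier :=
  Equiv.ofBijective (L.mul a) ⟨
    fun x y hxy => by
      obtain ⟨z, _, hu⟩ := L.divL a (L.mul a x)
      rw [hu x rfl, ← hu y hxy.symm],
    fun b => ⟨(L.divL a b).choose, (L.divL a b).choose_spec.1⟩⟩

@[simp] lemma loopLeftMul_apply (L : LoopCat) (a x : L.carrier) :
    loopLeftMul L a x = L.mul a x := rfl

noncomputable def toRps (L : LoopCat) : RpsCat where
  pts := L.carrier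
  M := Set.range (loopLeftMul L)
  one_mem := ⟨L.e, by ext x; simp [L.e_mul]⟩
  reg := fun α β => by
    obtain ⟨y, hy, hu⟩ := L.divR α β
    refine ⟨⟨loopLeftMul L y, y, rfl⟩, hy, ?_⟩
    rintro ⟨m, a, rfl⟩ hm
    apply Subtype.ext
    show loopLeftMul L a = loopLeftMul L y
    rw [hu a hm]
  pt := L.e

lemma toRps_minv (L : LoopCat) (a : L.carrier) :
    minv (toRps L) a = ⟨loopLeftMul L a, a, rfl⟩ :=
  (minv_unique (toRps L) a ⟨loopLeftMul L a, a, rfl⟩ (L.mul_e a)).symm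

lemma toRps_mul (L : LoopCat) (a b : L.carrier) :
    (inducedLoop (toRps L)).mul a b = L.mul a b := by
  erw [inducedLoop_mul, toRps_minv]
  rfl

instance F_faithful : F.Faithful where
  map_injective {X Y} u v h := by
    have hΦ : u.Φ = v.Φ := congrArg LoopHom.toFun h
    have key : ∀ (w : X ⟶ Y) (m : X.M), w.f m = minv Y (w.Φ ((m : Equiv.Perm X.pts) X.pt)) := by
      intro w m
      exact minv_unique Y _ _ (by rw [← w.map_pt, ← w.equivariant])
    have hf : u.f = v.f := funext fun m => by rw [key u, key v, hΦ]
    exact RpsHom.ext hf hΦ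

instance F_full : F.Full where
  map_surjective {X Y} h := by
    refine ⟨⟨fun m => minv Y (h.toFun ((m : Equiv.Perm X.pts) X.pt)), h.toFun, ?_, ?_⟩, rfl⟩
    · exact h.map_e
    · intro m α
      have h1 : (m : Equiv.Perm X.pts) α
          = (inducedLoop X).mul ((m : Equiv.Perm X.pts) X.pt) α := by
        rw [inducedLoop_mul, minv_apply_pt]
      rw [h1]
      erw [h.map_mul]
      erw [inducedLoop_mul]

instance F_essSurj : F.EssSurj where
  mem_essImage L := by
    refine ⟨toRps L, ⟨⟨⟨_root_.id, fun a b => toRps_mul L a b⟩,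
      ⟨_root_.id, fun a b => (toRps_mul L a b).symm⟩, ?_, ?_⟩⟩⟩
    · apply LoopHom.ext; rfl
    · apply LoopHom.ext; rfl


theorem stmt7 : F.IsEquivalence := {}
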